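/- The bracket on H is alternating ([u,u] = 0 for all u ∈ H) and satisfies the Jacobi identity [[u,v],w] + [[v,w],u] + [[w,u],v] = 0 for all u, v, w ∈ H. Consequently H(2;(n1,n2);Φ(1)) is a Lie algebra over F of dimension p^(n1+n2). -/

import Mathlib

open scoped BigOperators

/-- Binomial coefficient of integers, zero unless `0 ≤ b ≤ a`. -/
def intChoose (a b : ℤ) : ℤ :=
  if 0 ≤ b ∧ b ≤ a then (a.toNat.choose b.toNat : ℤ) else 0

/-- The structure constant `N(i,j,k,l)`. -/
def Ncoef (i j k l : ℤ) : ℤ :=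
  intChoose (i + k - 1) i * intChoose (j + l - 1) (j - 1) -
    intChoose (i + k - 1) (i - 1) * intChoose (j + l - 1) j

variable (F : Type*) [Field F]

/-- The underlying space of `H(2;(n1,n2);Φ(1))`, with basis indexed by `Fin r × Fin q`. -/
abbrev Hsp (r q : ℕ) : Type _ := Fin r × Fin q → F

/-- The divided power monomial `x^(i) y^(j)`, read as `0` when out of range. -/
noncomputable def mm (r q : ℕ) (i j : ℤ) : Hsp F r q :=
  if h : 0 ≤ i ∧ i < (r : ℤ) ∧ 0 ≤ j ∧ j < (q : ℤ) then
    Pi.single (⟨i.toNat, by omega⟩, ⟨j.toNat, by omega⟩) 1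
  else 0

/-- The bracket on basis elements of `H(2;(n1,n2);Φ(1))`. -/
noncomputable def bB (r q : ℕ) (a b : Fin r × Fin q) : Hsp F r q :=
  if 0 < (a.1 : ℤ) + (b.1 : ℤ) then
    ((Ncoef (a.1 : ℤ) (a.2 : ℤ) (b.1 : ℤ) (b.2 : ℤ) : ℤ) : F) •
      mm F r q ((a.1 : ℤ) + (b.1 : ℤ) - 1) ((a.2 : ℤ) + (b.2 : ℤ) - 1)
  else
    ((intChoose ((a.2 : ℤ) + (b.2 : ℤ) - 1) (b.2 : ℤ) -
        intChoose ((a.2 : ℤ) + (b.2 : ℤ) - 1) (a.2 : ℤ) : ℤ) : F) •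
      mm F r q ((r : ℤ) - 1) ((a.2 : ℤ) + (b.2 : ℤ) - 1)

/-- The bilinear bracket of `H(2;(n1,n2);Φ(1))`, extending `bB` bilinearly. -/
noncomputable def br (r q : ℕ) (u v : Hsp F r q) : Hsp F r q :=
  ∑ a : Fin r × Fin q, ∑ b : Fin r × Fin q, (u a * v b) • bB F r q a b

namespace AZh

lemma ic_zero_left {a b : ℤ} (h : a < 0) : intChoose a b = 0 := by
  rw [intChoose, if_neg]; omega

lemma ic_zero_right {a b : ℤ} (h : b < 0) : intChoose a b = 0 := by
  rw [intChoose, if_neg]; omega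

lemma ic_eq {a b : ℤ} (ha : 0 ≤ a) (hb : 0 ≤ b) :
    intChoose a b = (a.toNat.choose b.toNat : ℤ) := by
  by_cases h : b ≤ a
  · rw [intChoose, if_pos ⟨hb, h⟩]
  · rw [intChoose, if_neg (by omega), Nat.choose_eq_zero_of_lt (by omega), Nat.cast_zero]

lemma ic_nat (a b : ℕ) : intChoose (a : ℤ) (b : ℤ) = (a.choose b : ℤ) := by
  rw [ic_eq (by omega) (by omega)]; simp

lemma ic_self {a : ℤ} (ha : 0 ≤ a) : intChoose a a = 1 := by
  rw [ic_eq ha ha, Nat.choose_self]; rfl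

lemma ic_zero {a : ℤ} (ha : 0 ≤ a) : intChoose a 0 = 1 := by
  rw [ic_eq ha le_rfl]; simp

lemma ic_of_lt {a b : ℤ} (h : a < b) : intChoose a b = 0 := by
  by_cases ha : a < 0
  · exact ic_zero_left ha
  · rw [ic_eq (by omega) (by omega), Nat.choose_eq_zero_of_lt (by omega), Nat.cast_zero]

lemma ic_symm (a b : ℤ) : intChoose a b = intChoose a (a - b) := by
  by_cases ha : a < 0
  · rw [ic_zero_left ha, ic_zero_left ha]
  · by_cases hb : b < 0
    · rw [ic_zero_right hb, ic_of_lt (by omega)]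
    · by_cases hab : a < b
      · rw [ic_of_lt hab, ic_zero_right (by omega)]
      · rw [ic_eq (by omega) (by omega), ic_eq (by omega) (by omega)]
        have h1 : (a - b).toNat = a.toNat - b.toNat := by omega
        rw [h1, Nat.choose_symm (by omega)]

lemma ic_pascal {a : ℤ} (b : ℤ) (ha : 1 ≤ a) :
    intChoose a b = intChoose (a - 1) (b - 1) + intChoose (a - 1) b := by
  by_cases hb : b < 0
  · rw [ic_zero_right hb, ic_zero_right (by omega), ic_zero_right hb]; ring
  · by_cases hb0 : b = 0
    · subst hb0
      rw [ic_zero (by omega), ic_zero_right (by omega), ic_zero (by omega)]; ring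
    · rw [ic_eq (by omega) (by omega), ic_eq (by omega) (by omega),
        ic_eq (by omega) (by omega)]
      have h1 : a.toNat = (a - 1).toNat + 1 := by omega
      have h2 : b.toNat = (b - 1).toNat + 1 := by omega
      rw [h1, h2, Nat.choose_succ_succ, Nat.cast_add]

/-- Associativity identity for binomial coefficients over ℕ. -/
lemma nat_choose_assoc (a b c : ℕ) :
    (a + b).choose a * (a + b + c).choose (a + b) = (b + c).choose b * (a + b + c).choose a := by
  have key : ((a + b).choose a * (a + b + c).choose (a + b) : ℚ)
      = ((b + c).choose b * (a + b + c).choose a : ℚ) := by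
    rw [Nat.cast_choose ℚ (by omega : a ≤ a + b), Nat.cast_choose ℚ (by omega : a + b ≤ a + b + c),
      Nat.cast_choose ℚ (by omega : b ≤ b + c), Nat.cast_choose ℚ (by omega : a ≤ a + b + c)]
    have e1 : a + b - a = b := by omega
    have e2 : a + b + c - (a + b) = c := by omega
    have e3 : b + c - b = c := by omega
    have e4 : a + b + c - a = b + c := by omega
    rw [e1, e2, e3, e4]
    have f1 : (Nat.factorial a : ℚ) ≠ 0 := by exact_mod_cast (Nat.factorial_pos a).ne'
    have f2 : (Nat.factorial b : ℚ) ≠ 0 := by exact_mod_cast (Nat.factorial_pos b).ne'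
    have f3 : (Nat.factorial c : ℚ) ≠ 0 := by exact_mod_cast (Nat.factorial_pos c).ne'
    have f4 : (Nat.factorial (a + b) : ℚ) ≠ 0 := by exact_mod_cast (Nat.factorial_pos (a + b)).ne'
    have f5 : (Nat.factorial (b + c) : ℚ) ≠ 0 := by exact_mod_cast (Nat.factorial_pos (b + c)).ne'
    field_simp
  exact_mod_cast key

lemma ic_assoc {a b c : ℤ} (ha : 0 ≤ a) (hb : 0 ≤ b) (hc : 0 ≤ c) :
    intChoose (a + b) a * intChoose (a + b + c) (a + b)
      = intChoose (b + c) b * intChoose (a + b + c) a := by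
  obtain ⟨a', rfl⟩ := Int.eq_ofNat_of_zero_le ha
  obtain ⟨b', rfl⟩ := Int.eq_ofNat_of_zero_le hb
  obtain ⟨c', rfl⟩ := Int.eq_ofNat_of_zero_le hc
  have e1 : (a' : ℤ) + b' = ((a' + b' : ℕ) : ℤ) := by push_cast; ring
  have e2 : (a' : ℤ) + b' + c' = ((a' + b' + c' : ℕ) : ℤ) := by push_cast; ring
  have e3 : (b' : ℤ) + c' = ((b' + c' : ℕ) : ℤ) := by push_cast; ring
  rw [e2, e1, e3, ic_nat, ic_nat, ic_nat, ic_nat, ← Nat.cast_mul, ← Nat.cast_mul]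
  exact_mod_cast nat_choose_assoc a' b' c'

/-- Kummer-type vanishing: `p ∣ (p^n).choose a` for `0 < a < p^n`. -/
lemma prime_dvd_choose_pow {p n a : ℕ} (hp : p.Prime) (h0 : 0 < a) (h1 : a < p ^ n) :
    p ∣ (p ^ n).choose a := by
  haveI : Fact p.Prime := ⟨hp⟩
  have hpoly := add_pow_char_pow (R := Polynomial (ZMod p)) (p := p) (n := n) (x := Polynomial.X) (y := 1)
  have hc := congrArg (fun f : Polynomial (ZMod p) => f.coeff a) hpoly
  simp only [Polynomial.coeff_X_add_one_pow, one_pow, Polynomial.coeff_add,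
    Polynomial.coeff_X_pow, Polynomial.coeff_one] at hc
  rw [if_neg (by omega), if_neg (by omega), add_zero] at hc
  exact (ZMod.natCast_eq_zero_iff _ _).mp hc

end AZh

namespace AZh

variable {F} {r q : ℕ}

/-- basis vector -/
def sm (a : Fin r × Fin q) : Hsp F r q := Pi.single a 1

lemma mm_in {i j : ℤ} (h : 0 ≤ i ∧ i < (r : ℤ) ∧ 0 ≤ j ∧ j < (q : ℤ)) :
    mm F r q i j = sm (⟨i.toNat, by omega⟩, ⟨j.toNat, by omega⟩) := by
  rw [mm, dif_pos h]; rfl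

lemma mm_out {i j : ℤ} (h : ¬(0 ≤ i ∧ i < (r : ℤ) ∧ 0 ≤ j ∧ j < (q : ℤ))) :
    mm F r q i j = 0 := by
  rw [mm, dif_neg h]

lemma sm_eq_mm (a : Fin r × Fin q) : sm a = mm F r q (a.1 : ℤ) (a.2 : ℤ) := by
  rw [mm_in ⟨by omega, by exact_mod_cast a.1.isLt, by omega, by exact_mod_cast a.2.isLt⟩]
  congr 1

/-- Linear extension of a map defined on basis indices. -/
noncomputable def E1 (φ : Fin r × Fin q → Hsp F r q) : Hsp F r q →ₗ[F] Hsp F r q where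
  toFun u := ∑ a, u a • φ a
  map_add' u v := by simp [add_smul, Finset.sum_add_distrib]
  map_smul' c u := by simp [Finset.smul_sum, smul_smul]

lemma E1_single (φ : Fin r × Fin q → Hsp F r q) (a : Fin r × Fin q) :
    E1 φ (sm a) = φ a := by
  simp only [E1, LinearMap.coe_mk, AddHom.coe_mk, sm, Pi.single_apply, ite_smul, zero_smul]
  rw [Finset.sum_ite_eq' Finset.univ a (fun b => (1:F) • φ b)]
  simp

/-- Bilinear extension of a map defined on pairs of basis indices. -/
noncomputable def E2 (B : Fin r × Fin q → Fin r × Fin q → Hsp F r q) :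
    Hsp F r q →ₗ[F] Hsp F r q →ₗ[F] Hsp F r q :=
  LinearMap.mk₂ F (fun u v => ∑ a, ∑ b, (u a * v b) • B a b)
    (fun u u' v => by simp [add_mul, add_smul, Finset.sum_add_distrib])
    (fun c u v => by simp [Finset.smul_sum, smul_smul, mul_assoc])
    (fun u v v' => by simp [mul_add, add_smul, Finset.sum_add_distrib])
    (fun c u v => by simp [Finset.smul_sum, smul_smul, mul_left_comm])

lemma E2_single (B : Fin r × Fin q → Fin r × Fin q → Hsp F r q) (a b : Fin r × Fin q) :
    E2 B (sm a) (sm b) = B a b := by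
  simp only [E2, LinearMap.mk₂_apply, sm, Pi.single_apply, ite_mul, one_mul, zero_mul,
    ite_smul, zero_smul, one_smul]
  have step : ∀ x : Fin r × Fin q,
      (∑ y : Fin r × Fin q, if x = a then if y = b then B x y else 0 else 0)
        = if x = a then B x b else 0 := by
    intro x; split <;> simp [Finset.sum_ite_eq']
  simp only [step, Finset.sum_ite_eq', Finset.mem_univ, if_true]

lemma lin_ext {M : Type*} [AddCommMonoid M] [Module F M]
    {f g : Hsp F r q →ₗ[F] M} (h : ∀ a, f (sm a) = g (sm a)) : f = g := by
  apply Module.Basis.ext (Pi.basisFun F (Fin r × Fin q))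
  intro a
  simpa [Pi.basisFun_apply, sm] using h a

lemma bilin_ext {M : Type*} [AddCommMonoid M] [Module F M]
    {f g : Hsp F r q →ₗ[F] Hsp F r q →ₗ[F] M}
    (h : ∀ a b, f (sm a) (sm b) = g (sm a) (sm b)) : f = g := by
  apply LinearMap.ext_basis (Pi.basisFun F (Fin r × Fin q)) (Pi.basisFun F (Fin r × Fin q))
  intro a b
  simpa [Pi.basisFun_apply, sm] using h a b

end AZh

namespace AZh

variable {F : Type*} [Field F] {r q : ℕ}

/-- the product of the divided power algebra, bilinearly extended -/
noncomputable def pml : Hsp F r q →ₗ[F] Hsp F r q →ₗ[F] Hsp F r q :=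
  E2 (fun a b =>
    ((intChoose ((a.1 : ℤ) + (b.1 : ℤ)) (a.1 : ℤ) *
       intChoose ((a.2 : ℤ) + (b.2 : ℤ)) (a.2 : ℤ) : ℤ) : F) •
      mm F r q ((a.1 : ℤ) + (b.1 : ℤ)) ((a.2 : ℤ) + (b.2 : ℤ)))

/-- the partial derivative in `y` -/
noncomputable def dY : Hsp F r q →ₗ[F] Hsp F r q :=
  E1 (fun a => mm F r q (a.1 : ℤ) ((a.2 : ℤ) - 1))

/-- the twisted partial derivative in `x` -/
noncomputable def dX : Hsp F r q →ₗ[F] Hsp F r q :=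
  E1 (fun a => if (a.1 : ℕ) = 0 then mm F r q ((r : ℤ) - 1) (a.2 : ℤ)
    else mm F r q ((a.1 : ℤ) - 1) (a.2 : ℤ))

/-- projection onto the `x`-degree zero part -/
noncomputable def pP : Hsp F r q →ₗ[F] Hsp F r q :=
  E1 (fun a => if (a.1 : ℕ) = 0 then mm F r q 0 (a.2 : ℤ) else 0)

/-- the element `x^(r-1)` -/
noncomputable def zz : Hsp F r q := mm F r q ((r : ℤ) - 1) 0

lemma pml_mm {i j k l : ℤ} (hi : 0 ≤ i) (hj : 0 ≤ j) (hk : 0 ≤ k) (hl : 0 ≤ l) :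
    pml (mm F r q i j) (mm F r q k l)
      = ((intChoose (i + k) i * intChoose (j + l) j : ℤ) : F) • mm F r q (i + k) (j + l) := by
  by_cases h1 : i < (r : ℤ) ∧ j < (q : ℤ)
  · by_cases h2 : k < (r : ℤ) ∧ l < (q : ℤ)
    · rw [mm_in ⟨hi, h1.1, hj, h1.2⟩, mm_in ⟨hk, h2.1, hl, h2.2⟩, pml, E2_single]
      simp only [Fin.val_mk, Int.toNat_of_nonneg hi, Int.toNat_of_nonneg hj,
        Int.toNat_of_nonneg hk, Int.toNat_of_nonneg hl]
    · rw [mm_out (show ¬(0 ≤ k ∧ k < (r:ℤ) ∧ 0 ≤ l ∧ l < (q:ℤ)) by omega),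
        mm_out (show ¬(0 ≤ i + k ∧ i + k < (r:ℤ) ∧ 0 ≤ j + l ∧ j + l < (q:ℤ)) by omega)]
      simp
  · rw [mm_out (show ¬(0 ≤ i ∧ i < (r:ℤ) ∧ 0 ≤ j ∧ j < (q:ℤ)) by omega),
      mm_out (show ¬(0 ≤ i + k ∧ i + k < (r:ℤ) ∧ 0 ≤ j + l ∧ j + l < (q:ℤ)) by omega)]
    simp

lemma dY_mm {i j : ℤ} (hjq : j < q) : dY (mm F r q i j) = mm F r q i (j - 1) := by
  by_cases h : 0 ≤ i ∧ i < (r : ℤ) ∧ 0 ≤ j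
  · rw [mm_in ⟨h.1, h.2.1, h.2.2, hjq⟩, dY, E1_single]
    simp only [Fin.val_mk, Int.toNat_of_nonneg h.1, Int.toNat_of_nonneg h.2.2]
  · rw [mm_out (show ¬(0 ≤ i ∧ i < (r:ℤ) ∧ 0 ≤ j ∧ j < (q:ℤ)) by omega), map_zero,
      mm_out (show ¬(0 ≤ i ∧ i < (r:ℤ) ∧ 0 ≤ j - 1 ∧ j - 1 < (q:ℤ)) by omega)]

lemma dX_mm {i j : ℤ} (hir : i < r) :
    dX (mm F r q i j)
      = if i = 0 then mm F r q ((r : ℤ) - 1) j else mm F r q (i - 1) j := by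
  by_cases h : 0 ≤ i ∧ 0 ≤ j ∧ j < (q : ℤ)
  · rw [mm_in ⟨h.1, hir, h.2.1, h.2.2⟩, dX, E1_single]
    by_cases hi0 : i = 0
    · subst hi0
      simp only [Fin.val_mk, Int.toNat_of_nonneg h.2.1, if_pos rfl]
      norm_num
    · rw [if_neg (by simp only [Fin.val_mk]; omega), if_neg hi0]
      simp only [Fin.val_mk, Int.toNat_of_nonneg h.1, Int.toNat_of_nonneg h.2.1]
  · rw [mm_out (show ¬(0 ≤ i ∧ i < (r:ℤ) ∧ 0 ≤ j ∧ j < (q:ℤ)) by omega), map_zero]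
    split
    · rw [mm_out (by omega)]
    · rw [mm_out (by omega)]

lemma pP_mm {i j : ℤ} :
    pP (mm F r q i j) = if i = 0 then mm F r q 0 j else 0 := by
  by_cases h : 0 ≤ i ∧ i < (r : ℤ) ∧ 0 ≤ j ∧ j < (q : ℤ)
  · rw [mm_in h, pP, E1_single]
    by_cases hi0 : i = 0
    · subst hi0
      simp only [Fin.val_mk, Int.toNat_of_nonneg h.2.2.1, if_pos rfl]
      norm_num
    · rw [if_neg (by simp only [Fin.val_mk]; omega), if_neg hi0]
  · rw [mm_out h, map_zero]
    split
    · rw [mm_out (by omega)]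
    · rfl

end AZh

namespace AZh

/-- Abstract Jacobi identity for a "twisted Poisson bracket" on a commutative ring:
`DY` is a derivation commuting with `DX`, `DX` is a derivation up to the defect
`-z * (PI a * PI b)`, where `PI` is a multiplicative projection absorbed by `z`. -/
theorem abstract_jacobi {A : Type*} [CommRing A] (DX DY PI : A → A) (z : A)
    (haX : ∀ a b : A, DX (a + b) = DX a + DX b)
    (haY : ∀ a b : A, DY (a + b) = DY a + DY b)
    (h1 : ∀ a b : A, DY (a * b) = DY a * b + a * DY b)
    (h2 : ∀ a b : A, DX (a * b) = DX a * b + a * DX b - z * (PI a * PI b))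
    (h3 : ∀ a : A, DY (DX a) = DX (DY a))
    (h4 : ∀ a b : A, PI (a * b) = PI a * PI b)
    (h5 : ∀ a : A, z * a = z * PI a)
    (h6 : ∀ a : A, PI (DY a) = DY (PI a))
    (h7 : ∀ a : A, PI (PI a) = PI a)
    (u v w : A) :
    (DY (DY u * DX v - DX u * DY v) * DX w - DX (DY u * DX v - DX u * DY v) * DY w)
      + (DY (DY v * DX w - DX v * DY w) * DX u - DX (DY v * DX w - DX v * DY w) * DY u)
      + (DY (DY w * DX u - DX w * DY u) * DX v - DX (DY w * DX u - DX w * DY u) * DY v)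
      = 0 := by
  have hsX : ∀ a b : A, DX (a - b) = DX a - DX b := by
    intro a b
    rw [eq_sub_iff_add_eq, ← haX, sub_add_cancel]
  have hsY : ∀ a b : A, DY (a - b) = DY a - DY b := by
    intro a b
    rw [eq_sub_iff_add_eq, ← haY, sub_add_cancel]
  have hz : ∀ a c : A, z * a * DY c = z * (PI a * DY (PI c)) := by
    intro a c
    rw [mul_assoc, h5 (a * DY c), h4, h6]
  simp only [hsX, hsY, h1, h2, h3, h6]
  simp only [sub_mul, add_mul]
  simp only [hz, h4, h6, h7]
  ring

end AZh

namespace AZh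

variable {F : Type*} [Field F] {r q : ℕ}

/-- unconditional version of `pml_mm` -/
lemma pml_mm' (i j k l : ℤ) :
    pml (mm F r q i j) (mm F r q k l)
      = ((intChoose (i + k) i * intChoose (j + l) j : ℤ) : F) • mm F r q (i + k) (j + l) := by
  by_cases hi : 0 ≤ i
  · by_cases hj : 0 ≤ j
    · by_cases hk : 0 ≤ k
      · by_cases hl : 0 ≤ l
        · exact pml_mm hi hj hk hl
        · rw [mm_out (show ¬(0 ≤ k ∧ k < (r:ℤ) ∧ 0 ≤ l ∧ l < (q:ℤ)) by omega), map_zero,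
            ic_of_lt (show j + l < j by omega), mul_zero, Int.cast_zero, zero_smul]
      · rw [mm_out (show ¬(0 ≤ k ∧ k < (r:ℤ) ∧ 0 ≤ l ∧ l < (q:ℤ)) by omega), map_zero,
          ic_of_lt (show i + k < i by omega), zero_mul, Int.cast_zero, zero_smul]
    · rw [mm_out (show ¬(0 ≤ i ∧ i < (r:ℤ) ∧ 0 ≤ j ∧ j < (q:ℤ)) by omega),
        LinearMap.map_zero₂, ic_zero_right (show j < 0 by omega), mul_zero, Int.cast_zero, zero_smul]
  · rw [mm_out (show ¬(0 ≤ i ∧ i < (r:ℤ) ∧ 0 ≤ j ∧ j < (q:ℤ)) by omega),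
      LinearMap.map_zero₂, ic_zero_right (show i < 0 by omega), zero_mul, Int.cast_zero, zero_smul]

section identities

variable (hKq : ∀ a : ℤ, 0 < a → a < q → ((intChoose (q : ℤ) a : ℤ) : F) = 0)
variable (hKr : ∀ a : ℤ, 0 < a → a < r → ((intChoose (r : ℤ) a : ℤ) : F) = 0)

lemma comm_mm {i j k l : ℤ} (hi : 0 ≤ i) (hj : 0 ≤ j) (hk : 0 ≤ k) (hl : 0 ≤ l) :
    pml (mm F r q i j) (mm F r q k l) = pml (mm F r q k l) (mm F r q i j) := by
  rw [pml_mm', pml_mm', show k + i = i + k by ring, show l + j = j + l by ring]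
  have e1 : intChoose (i + k) k = intChoose (i + k) i := by
    rw [ic_symm]; congr 1; ring
  have e2 : intChoose (j + l) l = intChoose (j + l) j := by
    rw [ic_symm]; congr 1; ring
  rw [e1, e2]

lemma assoc_mm {i j k l s t : ℤ} (hi : 0 ≤ i) (hj : 0 ≤ j) (hk : 0 ≤ k) (hl : 0 ≤ l)
    (hs : 0 ≤ s) (ht : 0 ≤ t) :
    pml (pml (mm F r q i j) (mm F r q k l)) (mm F r q s t)
      = pml (mm F r q i j) (pml (mm F r q k l) (mm F r q s t)) := by
  rw [pml_mm', LinearMap.map_smul₂, pml_mm', pml_mm', map_smul,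
    pml_mm', smul_smul, smul_smul]
  rw [show i + (k + s) = i + k + s by ring, show j + (l + t) = j + l + t by ring]
  congr 1
  rw [← Int.cast_mul, ← Int.cast_mul]
  congr 1
  have hx := ic_assoc hi hk hs
  have hy := ic_assoc hj hl ht
  calc intChoose (i + k) i * intChoose (j + l) j *
        (intChoose (i + k + s) (i + k) * intChoose (j + l + t) (j + l))
      = (intChoose (i + k) i * intChoose (i + k + s) (i + k)) *
        (intChoose (j + l) j * intChoose (j + l + t) (j + l)) := by ring
    _ = (intChoose (k + s) k * intChoose (i + k + s) i) *
        (intChoose (l + t) l * intChoose (j + l + t) j) := by rw [hx, hy]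
    _ = intChoose (k + s) k * intChoose (l + t) l *
        (intChoose (i + k + s) i * intChoose (j + l + t) j) := by ring

lemma one_mm {k l : ℤ} (hk : 0 ≤ k) (hl : 0 ≤ l) :
    pml (mm F r q 0 0) (mm F r q k l) = mm F r q k l := by
  rw [pml_mm', show (0:ℤ) + k = k by ring, show (0:ℤ) + l = l by ring,
    ic_zero hk, ic_zero hl, mul_one, Int.cast_one, one_smul]

include hKq in
lemma dY_mul_mm {i j k l : ℤ} (hi : 0 ≤ i) (hj : 0 ≤ j) (hjq : j < q)
    (hk : 0 ≤ k) (hl : 0 ≤ l) (hlq : l < q) :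
    dY (pml (mm F r q i j) (mm F r q k l))
      = pml (dY (mm F r q i j)) (mm F r q k l)
        + pml (mm F r q i j) (dY (mm F r q k l)) := by
  rw [pml_mm', map_smul, dY_mm hjq, dY_mm hlq, pml_mm', pml_mm',
    show j - 1 + l = j + l - 1 by ring, show j + (l - 1) = j + l - 1 by ring, ← add_smul,
    ← Int.cast_add, ← mul_add]
  by_cases hjl0 : j + l = 0
  · rw [dY_mm (show j + l < (q:ℤ) by omega),
      mm_out (show ¬(0 ≤ i + k ∧ i + k < (r:ℤ) ∧ 0 ≤ j + l - 1 ∧ j + l - 1 < (q:ℤ)) by omega),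
      smul_zero, smul_zero]
  · rw [← ic_pascal j (show (1:ℤ) ≤ j + l by omega)]
    by_cases hjl : j + l < q
    · rw [dY_mm hjl]
    · by_cases hjl1 : j + l = q
      · rw [mm_out (show ¬(0 ≤ i + k ∧ i + k < (r:ℤ) ∧ 0 ≤ j + l ∧ j + l < (q:ℤ)) by omega),
          map_zero, smul_zero]
        have hj1 : 0 < j := by omega
        rw [show j + l = (q : ℤ) from hjl1, Int.cast_mul, hKq j hj1 (by omega), mul_zero,
          zero_smul]
      · rw [mm_out (show ¬(0 ≤ i + k ∧ i + k < (r:ℤ) ∧ 0 ≤ j + l ∧ j + l < (q:ℤ)) by omega),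
          map_zero, smul_zero,
          mm_out (show ¬(0 ≤ i + k ∧ i + k < (r:ℤ) ∧ 0 ≤ j + l - 1 ∧ j + l - 1 < (q:ℤ)) by omega),
          smul_zero]

end identities

end AZh

namespace AZh

variable {F : Type*} [Field F] {r q : ℕ}
variable (hKr : ∀ a : ℤ, 0 < a → a < r → ((intChoose (r : ℤ) a : ℤ) : F) = 0)

set_option linter.unusedVariables false

include hKr in
lemma dX_mul_mm {i j k l : ℤ} (hi : 0 ≤ i) (hir : i < r) (hj : 0 ≤ j)
    (hk : 0 ≤ k) (hkr : k < r) (hl : 0 ≤ l) :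
    dX (pml (mm F r q i j) (mm F r q k l))
      = pml (dX (mm F r q i j)) (mm F r q k l)
        + pml (mm F r q i j) (dX (mm F r q k l))
        - pml zz (pml (pP (mm F r q i j)) (pP (mm F r q k l))) := by
  rw [pml_mm', map_smul, dX_mm hir, dX_mm hkr, pP_mm, pP_mm]
  by_cases hi0 : i = 0
  · subst hi0
    rw [if_pos rfl, if_pos rfl]
    by_cases hk0 : k = 0
    · subst hk0
      rw [if_pos rfl, if_pos rfl]
      rw [show (0:ℤ) + 0 = 0 by ring]
      rw [dX_mm hir, if_pos rfl]
      simp only [zz]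
      rw [pml_mm', pml_mm', pml_mm', map_smul, pml_mm']
      rw [show (r:ℤ) - 1 + 0 = (r:ℤ) - 1 by ring, show (0:ℤ) + ((r:ℤ) - 1) = (r:ℤ) - 1 by ring,
        show (r:ℤ) - 1 + (0 + 0) = (r:ℤ) - 1 by ring, show (0:ℤ) + (j + l) = j + l by ring,
        show (0:ℤ) + 0 = 0 by ring]
      rw [ic_zero (le_refl (0:ℤ)), ic_self (show (0:ℤ) ≤ (r:ℤ) - 1 by omega),
        ic_zero (show (0:ℤ) ≤ (r:ℤ) - 1 by omega), ic_zero (show (0:ℤ) ≤ j + l by omega)]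
      push_cast
      simp only [one_mul, mul_one, one_smul, smul_smul]
      abel
    · rw [if_neg hk0, if_neg hk0]
      rw [show (0:ℤ) + k = k by ring, dX_mm hkr, if_neg hk0]
      rw [pml_mm', pml_mm', map_zero, map_zero, sub_zero]
      rw [mm_out (show ¬(0 ≤ (r:ℤ) - 1 + k ∧ (r:ℤ) - 1 + k < (r:ℤ) ∧ 0 ≤ j + l ∧ j + l < (q:ℤ))
        by omega), smul_zero, zero_add]
      rw [show (0:ℤ) + (k - 1) = k - 1 by ring, ic_zero (show (0:ℤ) ≤ k by omega),
        ic_zero (show (0:ℤ) ≤ k - 1 by omega)]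
  · rw [if_neg hi0, if_neg hi0]
    by_cases hk0 : k = 0
    · subst hk0
      rw [if_pos rfl, if_pos rfl]
      rw [show i + 0 = i by ring, dX_mm hir, if_neg hi0]
      rw [pml_mm', pml_mm', LinearMap.map_zero₂, map_zero, sub_zero]
      rw [mm_out (show ¬(0 ≤ i + ((r:ℤ) - 1) ∧ i + ((r:ℤ) - 1) < (r:ℤ) ∧ 0 ≤ j + l ∧
        j + l < (q:ℤ)) by omega), smul_zero, add_zero]
      rw [show i - 1 + 0 = i - 1 by ring, ic_self (show (0:ℤ) ≤ i by omega),
        ic_self (show (0:ℤ) ≤ i - 1 by omega)]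
    · rw [if_neg hk0, if_neg hk0]
      rw [LinearMap.map_zero₂, map_zero, sub_zero]
      rw [pml_mm', pml_mm', show i - 1 + k = i + k - 1 by ring,
        show i + (k - 1) = i + k - 1 by ring, ← add_smul, ← Int.cast_add, ← add_mul,
        ← ic_pascal i (show (1:ℤ) ≤ i + k by omega)]
      by_cases hikr : i + k < r
      · rw [dX_mm hikr, if_neg (show ¬(i + k = 0) by omega)]
      · by_cases hik : i + k = (r:ℤ)
        · rw [mm_out (show ¬(0 ≤ i + k ∧ i + k < (r:ℤ) ∧ 0 ≤ j + l ∧ j + l < (q:ℤ)) by omega),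
            map_zero, smul_zero, Int.cast_mul, hik, hKr i (by omega) (by omega), zero_mul,
            zero_smul]
        · rw [mm_out (show ¬(0 ≤ i + k ∧ i + k < (r:ℤ) ∧ 0 ≤ j + l ∧ j + l < (q:ℤ)) by omega),
            map_zero, smul_zero,
            mm_out (show ¬(0 ≤ i + k - 1 ∧ i + k - 1 < (r:ℤ) ∧ 0 ≤ j + l ∧ j + l < (q:ℤ))
              by omega), smul_zero]

end AZh

namespace AZh

variable {F : Type*} [Field F] {r q : ℕ}

set_option linter.unusedVariables false

lemma dYdX_mm {i j : ℤ} (hir : i < r) (hjq : j < q) :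
    dY (dX (mm F r q i j)) = dX (dY (mm F r q i j)) := by
  rw [dX_mm hir, dY_mm hjq, dX_mm hir]
  by_cases hi0 : i = 0
  · rw [if_pos hi0, if_pos hi0, dY_mm hjq]
  · rw [if_neg hi0, if_neg hi0, dY_mm hjq]

lemma pP_mul_mm {i j k l : ℤ} (hi : 0 ≤ i) (hk : 0 ≤ k) :
    pP (pml (mm F r q i j) (mm F r q k l)) = pml (pP (mm F r q i j)) (pP (mm F r q k l)) := by
  rw [pml_mm', map_smul, pP_mm, pP_mm, pP_mm]
  by_cases hi0 : i = 0
  · by_cases hk0 : k = 0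
    · subst hi0; subst hk0
      rw [if_pos rfl, if_pos rfl, if_pos (show (0:ℤ) + 0 = 0 by ring), pml_mm',
        show (0:ℤ) + 0 = 0 by ring, ic_zero (le_refl (0:ℤ))]
    · rw [if_neg hk0, if_neg (show ¬(i + k = 0) by omega), map_zero, smul_zero]
  · rw [if_neg hi0, if_neg (show ¬(i + k = 0) by omega), LinearMap.map_zero₂, smul_zero]

lemma zz_pP_mm {i j : ℤ} (hi : 0 ≤ i) :
    pml zz (mm F r q i j) = pml zz (pP (mm F r q i j)) := by
  rw [pP_mm]
  by_cases hi0 : i = 0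
  · rw [if_pos hi0, hi0]
  · rw [if_neg hi0]
    simp only [zz]
    rw [pml_mm', map_zero,
      mm_out (show ¬(0 ≤ (r:ℤ) - 1 + i ∧ (r:ℤ) - 1 + i < (r:ℤ) ∧ 0 ≤ 0 + j ∧ 0 + j < (q:ℤ))
        by omega), smul_zero]

lemma pP_dY_mm {i j : ℤ} (hjq : j < q) :
    pP (dY (mm F r q i j)) = dY (pP (mm F r q i j)) := by
  rw [dY_mm hjq, pP_mm, pP_mm]
  by_cases hi0 : i = 0
  · rw [if_pos hi0, if_pos hi0, dY_mm hjq]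
  · rw [if_neg hi0, if_neg hi0, map_zero]

lemma pP_pP_mm {i j : ℤ} : pP (pP (mm F r q i j)) = pP (mm F r q i j) := by
  rw [pP_mm]
  by_cases hi0 : i = 0
  · rw [if_pos hi0, pP_mm, if_pos rfl]
  · rw [if_neg hi0, map_zero]

end AZh

namespace AZh

variable {F : Type*} [Field F] {r q : ℕ}

set_option linter.unusedVariables false

/-- The defining bracket on basis elements agrees with the twisted Poisson bracket. -/
lemma bB_eq_P (a b : Fin r × Fin q) :
    bB F r q a b = pml (dY (sm a)) (dX (sm b)) - pml (dX (sm a)) (dY (sm b)) := by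
  rw [sm_eq_mm a, sm_eq_mm b, bB]
  rw [dY_mm (show ((a.2 : ℕ) : ℤ) < q by exact_mod_cast a.2.isLt),
      dY_mm (show ((b.2 : ℕ) : ℤ) < q by exact_mod_cast b.2.isLt),
      dX_mm (show ((a.1 : ℕ) : ℤ) < r by exact_mod_cast a.1.isLt),
      dX_mm (show ((b.1 : ℕ) : ℤ) < r by exact_mod_cast b.1.isLt)]
  have hi : (0:ℤ) ≤ (a.1 : ℤ) := Int.natCast_nonneg _
  have hj : (0:ℤ) ≤ (a.2 : ℤ) := Int.natCast_nonneg _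
  have hk : (0:ℤ) ≤ (b.1 : ℤ) := Int.natCast_nonneg _
  have hl : (0:ℤ) ≤ (b.2 : ℤ) := Int.natCast_nonneg _
  have hir : ((a.1 : ℕ) : ℤ) < r := by exact_mod_cast a.1.isLt
  have hjq : ((a.2 : ℕ) : ℤ) < q := by exact_mod_cast a.2.isLt
  have hkr : ((b.1 : ℕ) : ℤ) < r := by exact_mod_cast b.1.isLt
  have hlq : ((b.2 : ℕ) : ℤ) < q := by exact_mod_cast b.2.isLt
  generalize hgi : ((a.1 : ℕ) : ℤ) = i at hi hir ⊢
  generalize hgj : ((a.2 : ℕ) : ℤ) = j at hj hjq ⊢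
  generalize hgk : ((b.1 : ℕ) : ℤ) = k at hk hkr ⊢
  generalize hgl : ((b.2 : ℕ) : ℤ) = l at hl hlq ⊢
  by_cases hi0 : i = 0
  · by_cases hk0 : k = 0
    · rw [if_neg (by omega), if_pos hi0, if_pos hk0, hi0, hk0]
      rw [pml_mm', pml_mm', show (0:ℤ) + ((r:ℤ) - 1) = (r:ℤ) - 1 by ring,
        show (r:ℤ) - 1 + 0 = (r:ℤ) - 1 by ring, show j - 1 + l = j + l - 1 by ring,
        show j + (l - 1) = j + l - 1 by ring, ← sub_smul, ← Int.cast_sub]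
      congr 2
      rw [ic_zero (by omega), ic_self (by omega), one_mul, one_mul]
      congr 1
      rw [ic_symm (j + l - 1) (j - 1)]
      congr 1
      ring
    · rw [if_pos (by omega), if_pos hi0, if_neg hk0, hi0, Ncoef]
      rw [pml_mm', pml_mm', show (0:ℤ) + (k - 1) = 0 + k - 1 by ring,
        show j - 1 + l = j + l - 1 by ring, show j + (l - 1) = j + l - 1 by ring]
      rw [mm_out (show ¬(0 ≤ (r:ℤ) - 1 + k ∧ (r:ℤ) - 1 + k < (r:ℤ) ∧ 0 ≤ j + l - 1 ∧
        j + l - 1 < (q:ℤ)) by omega), smul_zero, sub_zero]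
      congr 2
      rw [ic_zero_right (show (0:ℤ) - 1 < 0 by omega), zero_mul, sub_zero]
  · by_cases hk0 : k = 0
    · rw [if_pos (by omega), if_neg hi0, if_pos hk0, hk0, Ncoef]
      rw [pml_mm', pml_mm', show i - 1 + 0 = i + 0 - 1 by ring,
        show j - 1 + l = j + l - 1 by ring, show j + (l - 1) = j + l - 1 by ring]
      rw [mm_out (show ¬(0 ≤ i + ((r:ℤ) - 1) ∧ i + ((r:ℤ) - 1) < (r:ℤ) ∧ 0 ≤ j + l - 1 ∧
        j + l - 1 < (q:ℤ)) by omega), smul_zero, zero_sub, ← neg_smul]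
      congr 2
      rw [show i + 0 - 1 = i - 1 + 0 by ring, ic_of_lt (show i - 1 + 0 < i by omega),
        zero_mul, zero_sub]
      push_cast
      ring
    · rw [if_pos (by omega), if_neg hi0, if_neg hk0, Ncoef]
      rw [pml_mm', pml_mm', show i - 1 + k = i + k - 1 by ring,
        show i + (k - 1) = i + k - 1 by ring, show j - 1 + l = j + l - 1 by ring,
        show j + (l - 1) = j + l - 1 by ring, ← sub_smul, ← Int.cast_sub]

end AZh

namespace AZh

variable {F : Type*} [Field F] {r q : ℕ}
variable (hKq : ∀ a : ℤ, 0 < a → a < q → ((intChoose (q : ℤ) a : ℤ) : F) = 0)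
variable (hKr : ∀ a : ℤ, 0 < a → a < r → ((intChoose (r : ℤ) a : ℤ) : F) = 0)

set_option linter.unusedVariables false

lemma nn1 (a : Fin r × Fin q) : (0:ℤ) ≤ (a.1 : ℤ) := Int.natCast_nonneg _
lemma nn2 (a : Fin r × Fin q) : (0:ℤ) ≤ (a.2 : ℤ) := Int.natCast_nonneg _
lemma lt1 (a : Fin r × Fin q) : ((a.1 : ℕ) : ℤ) < r := by exact_mod_cast a.1.isLt
lemma lt2 (a : Fin r × Fin q) : ((a.2 : ℕ) : ℤ) < q := by exact_mod_cast a.2.isLt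

lemma pml_comm (u v : Hsp F r q) : pml u v = pml v u := by
  have h : (pml : Hsp F r q →ₗ[F] _) = pml.flip := by
    apply bilin_ext
    intro a b
    rw [LinearMap.flip_apply, sm_eq_mm a, sm_eq_mm b]
    exact comm_mm (nn1 a) (nn2 a) (nn1 b) (nn2 b)
  conv_lhs => rw [h]
  simp only [LinearMap.flip_apply]

lemma pml_assoc (u v w : Hsp F r q) : pml (pml u v) w = pml u (pml v w) := by
  have h : (pml.compr₂ pml : Hsp F r q →ₗ[F] _)
      = ((LinearMap.llcomp F _ _ _ ∘ₗ pml).compl₂ pml) := by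
    apply bilin_ext
    intro a b
    apply lin_ext
    intro c
    simp only [LinearMap.compr₂_apply, LinearMap.compl₂_apply, LinearMap.comp_apply,
      LinearMap.llcomp_apply]
    rw [sm_eq_mm a, sm_eq_mm b, sm_eq_mm c]
    exact assoc_mm (nn1 a) (nn2 a) (nn1 b) (nn2 b) (nn1 c) (nn2 c)
  have h2 := DFunLike.congr_fun (DFunLike.congr_fun (DFunLike.congr_fun h u) v) w
  simpa only [LinearMap.compr₂_apply, LinearMap.compl₂_apply, LinearMap.comp_apply,
    LinearMap.llcomp_apply] using h2

lemma pml_one (u : Hsp F r q) : pml (mm F r q 0 0) u = u := by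
  have h : (pml (mm F r q 0 0) : Hsp F r q →ₗ[F] _) = LinearMap.id := by
    apply lin_ext
    intro a
    rw [LinearMap.id_apply, sm_eq_mm a]
    exact one_mm (nn1 a) (nn2 a)
  rw [h, LinearMap.id_apply]

include hKq in
lemma dY_mul (u v : Hsp F r q) :
    dY (pml u v) = pml (dY u) v + pml u (dY v) := by
  have h : (pml.compr₂ dY : Hsp F r q →ₗ[F] _) = pml ∘ₗ dY + pml.compl₂ dY := by
    apply bilin_ext
    intro a b
    simp only [LinearMap.compr₂_apply, LinearMap.compl₂_apply, LinearMap.comp_apply,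
      LinearMap.add_apply]
    rw [sm_eq_mm a, sm_eq_mm b]
    exact dY_mul_mm hKq (nn1 a) (nn2 a) (lt2 a) (nn1 b) (nn2 b) (lt2 b)
  have h2 := DFunLike.congr_fun (DFunLike.congr_fun h u) v
  simpa only [LinearMap.compr₂_apply, LinearMap.compl₂_apply, LinearMap.comp_apply,
    LinearMap.add_apply] using h2

include hKr in
lemma dX_mul (u v : Hsp F r q) :
    dX (pml u v) = pml (dX u) v + pml u (dX v) - pml zz (pml (pP u) (pP v)) := by
  have h : (pml.compr₂ dX : Hsp F r q →ₗ[F] _)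
      = pml ∘ₗ dX + pml.compl₂ dX - (((pml ∘ₗ pP).compl₂ pP).compr₂ (pml zz)) := by
    apply bilin_ext
    intro a b
    simp only [LinearMap.compr₂_apply, LinearMap.compl₂_apply, LinearMap.comp_apply,
      LinearMap.add_apply, LinearMap.sub_apply]
    rw [sm_eq_mm a, sm_eq_mm b]
    exact dX_mul_mm hKr (nn1 a) (lt1 a) (nn2 a) (nn1 b) (lt1 b) (nn2 b)
  have h2 := DFunLike.congr_fun (DFunLike.congr_fun h u) v
  simpa only [LinearMap.compr₂_apply, LinearMap.compl₂_apply, LinearMap.comp_apply,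
    LinearMap.add_apply, LinearMap.sub_apply] using h2

lemma dYdX (u : Hsp F r q) : dY (dX u) = dX (dY u) := by
  have h : (dY ∘ₗ dX : Hsp F r q →ₗ[F] _) = dX ∘ₗ dY := by
    apply lin_ext
    intro a
    simp only [LinearMap.comp_apply]
    rw [sm_eq_mm a]
    exact dYdX_mm (lt1 a) (lt2 a)
  have h2 := DFunLike.congr_fun h u
  simpa only [LinearMap.comp_apply] using h2

lemma pP_mul (u v : Hsp F r q) : pP (pml u v) = pml (pP u) (pP v) := by
  have h : (pml.compr₂ pP : Hsp F r q →ₗ[F] _) = (pml ∘ₗ pP).compl₂ pP := by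
    apply bilin_ext
    intro a b
    simp only [LinearMap.compr₂_apply, LinearMap.compl₂_apply, LinearMap.comp_apply]
    rw [sm_eq_mm a, sm_eq_mm b]
    exact pP_mul_mm (nn1 a) (nn1 b)
  have h2 := DFunLike.congr_fun (DFunLike.congr_fun h u) v
  simpa only [LinearMap.compr₂_apply, LinearMap.compl₂_apply, LinearMap.comp_apply] using h2

lemma zz_pP (u : Hsp F r q) : pml zz u = pml zz (pP u) := by
  have h : (pml zz : Hsp F r q →ₗ[F] _) = pml zz ∘ₗ pP := by
    apply lin_ext
    intro a
    simp only [LinearMap.comp_apply]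
    rw [sm_eq_mm a]
    exact zz_pP_mm (nn1 a)
  conv_lhs => rw [h]
  rfl

lemma pP_dY (u : Hsp F r q) : pP (dY u) = dY (pP u) := by
  have h : (pP ∘ₗ dY : Hsp F r q →ₗ[F] _) = dY ∘ₗ pP := by
    apply lin_ext
    intro a
    simp only [LinearMap.comp_apply]
    rw [sm_eq_mm a]
    exact pP_dY_mm (lt2 a)
  have h2 := DFunLike.congr_fun h u
  simpa only [LinearMap.comp_apply] using h2

lemma pP_pP (u : Hsp F r q) : pP (pP u) = pP u := by
  have h : (pP ∘ₗ pP : Hsp F r q →ₗ[F] _) = pP := by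
    apply lin_ext
    intro a
    simp only [LinearMap.comp_apply]
    rw [sm_eq_mm a]
    exact pP_pP_mm
  have h2 := DFunLike.congr_fun h u
  simpa only [LinearMap.comp_apply] using h2

lemma br_P (u v : Hsp F r q) :
    br F r q u v = pml (dY u) (dX v) - pml (dX u) (dY v) := by
  have h0 : br F r q u v = E2 (bB F r q) u v := by
    rw [E2, LinearMap.mk₂_apply, br]
  have h : (E2 (bB F r q) : Hsp F r q →ₗ[F] _)
      = (pml ∘ₗ dY).compl₂ dX - (pml ∘ₗ dX).compl₂ dY := by
    apply bilin_ext
    intro a b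
    simp only [LinearMap.compl₂_apply, LinearMap.comp_apply, LinearMap.sub_apply]
    rw [E2_single]
    exact bB_eq_P a b
  rw [h0, h]
  simp only [LinearMap.compl₂_apply, LinearMap.comp_apply, LinearMap.sub_apply]

end AZh

namespace AZh

variable {F : Type*} [Field F] {r q : ℕ}

set_option linter.unusedVariables false

/-- Type synonym carrying the divided power algebra structure. -/
def HA (F : Type*) [Field F] (r q : ℕ) : Type _ := Hsp F r q

instance : AddCommGroup (HA F r q) :=
  inferInstanceAs (AddCommGroup (Fin r × Fin q → F))

@[reducible]
noncomputable def haCommRing (F : Type*) [Field F] (r q : ℕ) : CommRing (HA F r q) :=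
  { (inferInstance : AddCommGroup (HA F r q)) with
    mul := fun u v => pml u v
    one := mm F r q 0 0
    left_distrib := fun a b c => map_add (pml a) b c
    right_distrib := fun a b c => by
      show pml (a + b) c = pml a c + pml b c
      exact LinearMap.map_add₂ pml a b c
    zero_mul := fun a => LinearMap.map_zero₂ pml a
    mul_zero := fun a => map_zero (pml a)
    mul_assoc := pml_assoc
    one_mul := pml_one
    mul_comm := pml_comm
    mul_one := fun a => (pml_comm a _).trans (pml_one a) }

variable (hKq : ∀ a : ℤ, 0 < a → a < q → ((intChoose (q : ℤ) a : ℤ) : F) = 0)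
variable (hKr : ∀ a : ℤ, 0 < a → a < r → ((intChoose (r : ℤ) a : ℤ) : F) = 0)

include hKq hKr in
lemma jacobi_hsp (u v w : Hsp F r q) :
    (pml (dY (pml (dY u) (dX v) - pml (dX u) (dY v)))
        (dX w) - pml (dX (pml (dY u) (dX v) - pml (dX u) (dY v))) (dY w))
    + (pml (dY (pml (dY v) (dX w) - pml (dX v) (dY w)))
        (dX u) - pml (dX (pml (dY v) (dX w) - pml (dX v) (dY w))) (dY u))
    + (pml (dY (pml (dY w) (dX u) - pml (dX w) (dY u)))
        (dX v) - pml (dX (pml (dY w) (dX u) - pml (dX w) (dY u))) (dY v)) = 0 := by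
  letI : CommRing (HA F r q) := haCommRing F r q
  exact abstract_jacobi (A := HA F r q) (fun x => dX x) (fun x => dY x) (fun x => pP x) zz
    (fun a b => map_add dX a b) (fun a b => map_add dY a b)
    (dY_mul hKq) (dX_mul hKr) dYdX pP_mul zz_pP pP_dY pP_pP u v w

end AZh

/-- the bracket of `H(2;(n1,n2);Φ(1))` is alternating and satisfies the
Jacobi identity, so `H` is a Lie algebra over `F`, of dimension `p^(n1+n2)`. -/
theorem stmt11 (p : ℕ) (hp : p.Prime) (F : Type*) [Field F] [CharP F p]
    (n1 n2 : ℕ) (hn1 : 0 < n1) (hn2 : 0 < n2) :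
    (∀ u : Hsp F (p ^ n1) (p ^ n2), br F (p ^ n1) (p ^ n2) u u = 0) ∧
    (∀ u v w : Hsp F (p ^ n1) (p ^ n2),
      br F (p ^ n1) (p ^ n2) (br F (p ^ n1) (p ^ n2) u v) w +
        br F (p ^ n1) (p ^ n2) (br F (p ^ n1) (p ^ n2) v w) u +
        br F (p ^ n1) (p ^ n2) (br F (p ^ n1) (p ^ n2) w u) v = 0) ∧
    Module.finrank F (Hsp F (p ^ n1) (p ^ n2)) = p ^ (n1 + n2) := by
  have hKr : ∀ a : ℤ, 0 < a → a < ((p ^ n1 : ℕ) : ℤ) →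
      ((intChoose ((p ^ n1 : ℕ) : ℤ) a : ℤ) : F) = 0 := by
    intro a h0 h1
    rw [AZh.ic_eq (Int.natCast_nonneg _) (le_of_lt h0)]
    have e : (((p ^ n1 : ℕ) : ℤ)).toNat = p ^ n1 := by omega
    rw [e, Int.cast_natCast]
    exact (CharP.cast_eq_zero_iff F p _).mpr
      (AZh.prime_dvd_choose_pow hp (by omega) (by omega))
  have hKq : ∀ a : ℤ, 0 < a → a < ((p ^ n2 : ℕ) : ℤ) →
      ((intChoose ((p ^ n2 : ℕ) : ℤ) a : ℤ) : F) = 0 := by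
    intro a h0 h1
    rw [AZh.ic_eq (Int.natCast_nonneg _) (le_of_lt h0)]
    have e : (((p ^ n2 : ℕ) : ℤ)).toNat = p ^ n2 := by omega
    rw [e, Int.cast_natCast]
    exact (CharP.cast_eq_zero_iff F p _).mpr
      (AZh.prime_dvd_choose_pow hp (by omega) (by omega))
  refine ⟨?_, ?_, ?_⟩
  · intro u
    rw [AZh.br_P, AZh.pml_comm (AZh.dY u) (AZh.dX u), sub_self]
  · intro u v w
    simp only [AZh.br_P]
    exact AZh.jacobi_hsp hKq hKr u v w
  · rw [Module.finrank_pi, Fintype.card_prod, Fintype.card_fin, Fintype.card_fin, ← pow_add]
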